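/- For integers d ≥ 0, 0 ≤ l ≤ d, and 0 ≤ j ≤ d, one has ∑_{i=−1}^{j} (−1)^{j−i} C(d−i+1, j−i) · C(d+1−l, i−l) = 1 if j = l and 0 otherwise. -/

import Mathlib

lemma helper_alt_sum (n J : ℕ) (h : J ≤ n) :
    ∑ m ∈ Finset.range (J + 1),
        (-1 : ℤ) ^ (J - m) * ((n - m).choose (J - m)) * ((n.choose m) : ℤ) =
      if J = 0 then 1 else 0 := by
  have key : ∀ m ∈ Finset.range (J + 1),
      (-1 : ℤ) ^ (J - m) * ((n - m).choose (J - m)) * ((n.choose m) : ℤ) =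
      (n.choose J : ℤ) * ((-1 : ℤ) ^ (J - m) * (J.choose m : ℤ)) := by
    intro m hm
    have hm' : m ≤ J := Nat.lt_succ_iff.mp (Finset.mem_range.mp hm)
    have := Nat.choose_mul (n := n) hm'
    have h2 : ((n.choose m : ℤ)) * ((n - m).choose (J - m) : ℤ) =
        (n.choose J : ℤ) * (J.choose m : ℤ) := by
      exact_mod_cast congrArg (Nat.cast (R := ℤ)) this.symm
    linear_combination ((-1 : ℤ) ^ (J - m)) * h2
  rw [Finset.sum_congr rfl key, ← Finset.mul_sum]
  have reflect : ∑ m ∈ Finset.range (J + 1), (-1 : ℤ) ^ (J - m) * (J.choose m : ℤ) =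
      ∑ m ∈ Finset.range (J + 1), (-1 : ℤ) ^ m * (J.choose m : ℤ) := by
    rw [← Finset.sum_range_reflect]
    apply Finset.sum_congr rfl
    intro m hm
    have hm' : m ≤ J := Nat.lt_succ_iff.mp (Finset.mem_range.mp hm)
    rw [Nat.succ_sub_one, Nat.sub_sub_self hm']
    simp [Nat.choose_symm hm']
  rw [reflect, Int.alternating_sum_range_choose]
  by_cases hJ : J = 0 <;> simp [hJ]

theorem alternating_sum_choose_mul_choose_eq_ite' (d l j : ℕ) (hl : l ≤ d) (hj : j ≤ d) :
    ∑ k ∈ Finset.range (j + 2),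
        (-1 : ℤ) ^ (j + 1 - k) * ((d + 2 - k).choose (j + 1 - k)) *
          (if l + 1 ≤ k then ((d + 1 - l).choose (k - 1 - l) : ℤ) else 0) =
      if j = l then 1 else 0 := by
  by_cases hlj : l ≤ j
  · -- terms with k ≤ l vanish
    rw [show Finset.range (j + 2) = Finset.Ico 0 (j + 2) by simp]
    rw [← Finset.sum_Ico_consecutive _ (Nat.zero_le (l + 1)) (by omega : l + 1 ≤ j + 2)]
    have hz : ∑ k ∈ Finset.Ico 0 (l + 1),
        (-1 : ℤ) ^ (j + 1 - k) * ((d + 2 - k).choose (j + 1 - k)) *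
          (if l + 1 ≤ k then ((d + 1 - l).choose (k - 1 - l) : ℤ) else 0) = 0 := by
      apply Finset.sum_eq_zero
      intro k hk
      have : ¬ (l + 1 ≤ k) := by
        simp only [Finset.mem_Ico] at hk; omega
      simp [this]
    rw [hz, zero_add, Finset.sum_Ico_eq_sum_range]
    have : ∀ m ∈ Finset.range (j + 2 - (l + 1)),
        (-1 : ℤ) ^ (j + 1 - (l + 1 + m)) * ((d + 2 - (l + 1 + m)).choose (j + 1 - (l + 1 + m))) *
          (if l + 1 ≤ l + 1 + m then ((d + 1 - l).choose (l + 1 + m - 1 - l) : ℤ) else 0) =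
        (-1 : ℤ) ^ (j - l - m) * (((d + 1 - l) - m).choose ((j - l) - m)) *
          (((d + 1 - l).choose m : ℤ)) := by
      intro m hm
      have h1 : j + 1 - (l + 1 + m) = j - l - m := by omega
      have h2 : d + 2 - (l + 1 + m) = (d + 1 - l) - m := by omega
      have h3 : l + 1 + m - 1 - l = m := by omega
      rw [h1, h2, h3, if_pos (by omega)]
    rw [Finset.sum_congr rfl this]
    have hr : j + 2 - (l + 1) = (j - l) + 1 := by omega
    rw [hr, helper_alt_sum (d + 1 - l) (j - l) (by omega)]
    by_cases hje : j = l
    · simp [hje]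
    · simp [hje]; omega
  · -- j < l : all terms zero
    rw [if_neg (by omega)]
    apply Finset.sum_eq_zero
    intro k hk
    have : ¬ (l + 1 ≤ k) := by
      simp only [Finset.mem_range] at hk; omega
    simp [this]
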